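/- An ℓ-partition λ cannot have simultaneously one normal i-box and two conormal i-boxes of the same residue i. -/

import Mathlib

/-- The hook length of the box `(a, b)` (0-indexed row `a`, column `b`)
of the Young diagram `μ`: the number of boxes to the right in its row,
plus the number of boxes below in its column, plus one. -/
def hookLen (μ : YoungDiagram) (a b : ℕ) : ℕ :=
  μ.rowLen a + μ.colLen b - a - b - 1

/-- A partition (Young diagram) is an `ℓ`-core when no box has hook length
divisible by `ℓ`. -/
def IsCore (ℓ : ℕ) (μ : YoungDiagram) : Prop :=
  ∀ a b : ℕ, (a, b) ∈ μ → ¬ ℓ ∣ hookLen μ a b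

/-- Two cells are adjacent if they share an edge. -/
def AdjCell (p q : ℕ × ℕ) : Prop :=
  (p.1 = q.1 ∧ (p.2 = q.2 + 1 ∨ q.2 = p.2 + 1)) ∨
  (p.2 = q.2 ∧ (p.1 = q.1 + 1 ∨ q.1 = p.1 + 1))

/-- A finite set of cells is connected if any two of its cells are joined by a
path of edge-adjacent cells inside the set. -/
def ConnectedCells (s : Finset (ℕ × ℕ)) : Prop :=
  ∀ p ∈ s, ∀ q ∈ s,
    Relation.ReflTransGen (fun x y => x ∈ s ∧ y ∈ s ∧ AdjCell x y) p q

/-- A set of cells contains no 2×2 square. -/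
def No2x2 (s : Finset (ℕ × ℕ)) : Prop :=
  ¬ ∃ a b : ℕ, (a, b) ∈ s ∧ (a + 1, b) ∈ s ∧ (a, b + 1) ∈ s ∧ (a + 1, b + 1) ∈ s

/-- `s` is a removable `ℓ`-rim hook of the Young diagram `lam`: a connected set of
`ℓ` cells of `lam`, containing no 2×2 square, whose removal from `lam` leaves the
Young diagram of a partition. -/
def IsRemovableRimHook (ℓ : ℕ) (lam : YoungDiagram) (s : Finset (ℕ × ℕ)) : Prop :=
  ∃ μ : YoungDiagram, μ.cells ⊆ lam.cells ∧ s = lam.cells \ μ.cells ∧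
    s.card = ℓ ∧ ConnectedCells s ∧ No2x2 s

/-- A set of cells all lying in a single row. -/
def HorizontalCells (s : Finset (ℕ × ℕ)) : Prop := ∀ p ∈ s, ∀ q ∈ s, p.1 = q.1

/-- A set of cells all lying in a single column. -/
def VerticalCells (s : Finset (ℕ × ℕ)) : Prop := ∀ p ∈ s, ∀ q ∈ s, p.2 = q.2

/-- Carter's condition (⋆): for all pairs of boxes in the same column of `lam`,
`ℓ` divides one hook length iff it divides the other. -/
def StarCond (ℓ : ℕ) (lam : YoungDiagram) : Prop :=
  ∀ a b c : ℕ, (a, c) ∈ lam → (b, c) ∈ lam →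
    (ℓ ∣ hookLen lam a c ↔ ℓ ∣ hookLen lam b c)

/-- `b` is obtained from `a` by removing a horizontal `ℓ`-rim hook;
equivalently `a` is obtained from `b` by adding a horizontal `ℓ`-rim hook. -/
def RemoveHorizHook (ℓ : ℕ) (a b : YoungDiagram) : Prop :=
  ∃ s, IsRemovableRimHook ℓ a s ∧ HorizontalCells s ∧ b.cells = a.cells \ s

/-- A partition is `ℓ`-regular if it has no `ℓ` equal nonzero parts. -/
def Regular (ℓ : ℕ) (lam : YoungDiagram) : Prop :=
  ∀ i : ℕ, lam.rowLen i = lam.rowLen (i + ℓ - 1) → lam.rowLen i = 0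

/-- An `ℓ`-partition: an `ℓ`-regular partition each of whose removable `ℓ`-rim hooks
is horizontal, and such that this remains true after removing any sequence of
horizontal `ℓ`-rim hooks. -/
def IsEllPartition (ℓ : ℕ) (lam : YoungDiagram) : Prop :=
  Regular ℓ lam ∧
  ∀ μ : YoungDiagram, Relation.ReflTransGen (RemoveHorizHook ℓ) lam μ →
    ∀ s, IsRemovableRimHook ℓ μ s → HorizontalCells s

/-- The residue of the position in row `a`, column `b` (0-indexed): `(b - a) mod ℓ`. -/
def resBox (ℓ : ℕ) (a b : ℕ) : ZMod ℓ := (b : ZMod ℓ) - (a : ZMod ℓ)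

/-- `(a,b)` is a removable box of `lam`: it is a box of `lam` whose removal
leaves a Young diagram. -/
def IsRemovableBox (lam : YoungDiagram) (a b : ℕ) : Prop :=
  (a, b) ∈ lam ∧ (a, b + 1) ∉ lam ∧ (a + 1, b) ∉ lam

/-- `(a,b)` is an addable box of `lam`: it is not a box of `lam` and adding it
yields a Young diagram. -/
def IsAddableBox (lam : YoungDiagram) (a b : ℕ) : Prop :=
  (a, b) ∉ lam ∧ (b = 0 ∨ (a, b - 1) ∈ lam) ∧ (a = 0 ∨ (a - 1, b) ∈ lam)

/-- Row `a` contains a removable `i`-box of `lam`. -/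
def RemRow (ℓ : ℕ) (lam : YoungDiagram) (i : ZMod ℓ) (a : ℕ) : Prop :=
  ∃ b, IsRemovableBox lam a b ∧ resBox ℓ a b = i

/-- Row `a` contains an addable `i`-box of `lam`. -/
def AddRow (ℓ : ℕ) (lam : YoungDiagram) (i : ZMod ℓ) (a : ℕ) : Prop :=
  ∃ b, IsAddableBox lam a b ∧ resBox ℓ a b = i

/-- `(a, b)` is a normal `i`-box of `lam`: a removable `i`-box whose `−` sign is not
canceled in the reduced `i`-signature (reading bottom-left to top-right); i.e. every
segment of rows strictly below row ... strictly between contains at least as many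
removable `i`-boxes as addable `i`-boxes. -/
def NormalBox (ℓ : ℕ) (lam : YoungDiagram) (i : ZMod ℓ) (a b : ℕ) : Prop :=
  IsRemovableBox lam a b ∧ resBox ℓ a b = i ∧
  ∀ c < a, {r : ℕ | c ≤ r ∧ r < a ∧ AddRow ℓ lam i r}.ncard ≤
           {r : ℕ | c ≤ r ∧ r < a ∧ RemRow ℓ lam i r}.ncard

/-- `(a, b)` is a conormal `i`-box of `lam`: an addable `i`-box whose `+` sign is not
canceled in the reduced `i`-signature. -/
def ConormalBox (ℓ : ℕ) (lam : YoungDiagram) (i : ZMod ℓ) (a b : ℕ) : Prop :=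
  IsAddableBox lam a b ∧ resBox ℓ a b = i ∧
  ∀ c, a < c → {r : ℕ | a < r ∧ r ≤ c ∧ RemRow ℓ lam i r}.ncard ≤
               {r : ℕ | a < r ∧ r ≤ c ∧ AddRow ℓ lam i r}.ncard

namespace EllAux

open YoungDiagram Finset

/-! ### Basic characterizations -/

lemma rowLen_eq_of (μ : YoungDiagram) (r m : ℕ) (h : ∀ y, (r, y) ∈ μ ↔ y < m) :
    μ.rowLen r = m := by
  rcases Nat.lt_trichotomy (μ.rowLen r) m with h1 | h1 | h1
  · have := (h (μ.rowLen r)).mpr h1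
    rw [YoungDiagram.mem_iff_lt_rowLen] at this; omega
  · exact h1
  · have := (h m).mp (by rw [YoungDiagram.mem_iff_lt_rowLen]; exact h1)
    omega

lemma colLen_eq_of (μ : YoungDiagram) (cc m : ℕ) (h : ∀ y, (y, cc) ∈ μ ↔ y < m) :
    μ.colLen cc = m := by
  rcases Nat.lt_trichotomy (μ.colLen cc) m with h1 | h1 | h1
  · have := (h (μ.colLen cc)).mpr h1
    rw [YoungDiagram.mem_iff_lt_colLen] at this; omega
  · exact h1
  · have := (h m).mp (by rw [YoungDiagram.mem_iff_lt_colLen]; exact h1)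
    omega

/-! ### The truncated row-length function after removing the rim hook of box `(x,c)`,
whose foot is in row `f` (so `colLen c = f + 1`). -/

def trunc (lam : YoungDiagram) (x f c : ℕ) (r : ℕ) : ℕ :=
  if r < x then lam.rowLen r
  else if r < f then lam.rowLen (r + 1) - 1
  else if r = f then c
  else lam.rowLen r

section Trunc

variable {lam : YoungDiagram} {x f c : ℕ}

lemma trunc_of_lt (h : r < x) : trunc lam x f c r = lam.rowLen r := by
  unfold trunc; rw [if_pos h]

lemma trunc_of_mid (h1 : x ≤ r) (h2 : r < f) : trunc lam x f c r = lam.rowLen (r + 1) - 1 := by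
  unfold trunc; rw [if_neg (by omega), if_pos h2]

lemma trunc_of_f (h1 : x ≤ f) : trunc lam x f c f = c := by
  unfold trunc; rw [if_neg (by omega), if_neg (by omega), if_pos rfl]

lemma trunc_of_gt (h : f < r) : trunc lam x f c r = lam.rowLen r := by
  unfold trunc
  rcases Nat.lt_or_ge r x with h' | h'
  · rw [if_pos h']
  · rw [if_neg (by omega), if_neg (by omega), if_neg (by omega)]

lemma trunc_eq_outside (h : r < x ∨ f < r) : trunc lam x f c r = lam.rowLen r := by
  rcases h with h | h
  · exact trunc_of_lt h
  · exact trunc_of_gt h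

variable (hxf : x ≤ f) (hfc : (f, c) ∈ lam) (hf1 : (f + 1, c) ∉ lam)

include hxf hfc in
lemma trunc_le (r : ℕ) : trunc lam x f c r ≤ lam.rowLen r := by
  have hcf : c < lam.rowLen f := mem_iff_lt_rowLen.mp hfc
  rcases Nat.lt_or_ge r x with h | h
  · rw [trunc_of_lt h]
  rcases Nat.lt_trichotomy r f with h' | h' | h'
  · rw [trunc_of_mid h h']
    have := lam.rowLen_anti r (r+1) (by omega)
    omega
  · subst h'; rw [trunc_of_f hxf]; omega
  · rw [trunc_of_gt h']

include hxf hfc in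
lemma trunc_lt (r : ℕ) (h1 : x ≤ r) (h2 : r ≤ f) : trunc lam x f c r < lam.rowLen r := by
  have hcf : c < lam.rowLen f := mem_iff_lt_rowLen.mp hfc
  rcases Nat.lt_or_ge r f with h' | h'
  · rw [trunc_of_mid h1 h']
    have ha := lam.rowLen_anti (r+1) f (by omega)
    have hb := lam.rowLen_anti r (r+1) (by omega)
    omega
  · have : r = f := by omega
    subst this; rw [trunc_of_f hxf]; omega

include hxf hfc hf1 in
lemma trunc_succ_le (r : ℕ) : trunc lam x f c (r + 1) ≤ trunc lam x f c r := by
  have hcf : c < lam.rowLen f := mem_iff_lt_rowLen.mp hfc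
  have hf1' : lam.rowLen (f + 1) ≤ c := by
    by_contra hcon
    exact hf1 (mem_iff_lt_rowLen.mpr (by omega))
  have h01 := lam.rowLen_anti r (r + 1) (by omega)
  have h12 := lam.rowLen_anti (r + 1) (r + 1 + 1) (by omega)
  rcases Nat.lt_or_ge (r + 1) x with h | h
  · rw [trunc_of_lt h, trunc_of_lt (by omega)]; exact h01
  rcases Nat.lt_or_ge r x with hr | hr
  · -- r + 1 = x
    have hx : r + 1 = x := by omega
    rw [trunc_of_lt hr]
    rcases Nat.lt_or_ge (r + 1) f with h' | h'
    · rw [trunc_of_mid h h']; omega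
    · have : r + 1 = f := by omega
      rw [this, trunc_of_f hxf]
      have := lam.rowLen_anti r f (by omega)
      omega
  -- x ≤ r
  rcases Nat.lt_trichotomy (r + 1) f with h' | h' | h'
  · rw [trunc_of_mid h h', trunc_of_mid hr (by omega)]; omega
  · have g1 : trunc lam x f c (r + 1) = c := by rw [h', trunc_of_f hxf]
    have g2 : trunc lam x f c r = lam.rowLen f - 1 := by rw [trunc_of_mid hr (by omega), h']
    omega
  · rcases Nat.lt_trichotomy r f with h'' | h'' | h''
    · omega
    · subst h''; rw [trunc_of_gt h', trunc_of_f hxf]; exact hf1'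
    · rw [trunc_of_gt h', trunc_of_gt h'']; exact h01

include hxf hfc hf1 in
lemma trunc_anti : Antitone (trunc lam x f c) :=
  antitone_nat_of_succ_le (trunc_succ_le hxf hfc hf1)

/-! ### The diagram after removal -/

def removeD (lam : YoungDiagram) (x f c : ℕ) (hxf : x ≤ f) (hfc : (f, c) ∈ lam)
    (hf1 : (f + 1, c) ∉ lam) : YoungDiagram :=
  ⟨lam.cells.filter (fun pc => pc.2 < trunc lam x f c pc.1), by
    intro q p hle hq
    simp only [Finset.coe_filter, Set.mem_setOf_eq, Finset.mem_coe] at hq ⊢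
    obtain ⟨hq1, hq2⟩ := hq
    refine ⟨lam.isLowerSet hle hq1, ?_⟩
    calc p.2 ≤ q.2 := hle.2
    _ < trunc lam x f c q.1 := hq2
    _ ≤ trunc lam x f c p.1 := trunc_anti hxf hfc hf1 hle.1⟩

variable (hxf : x ≤ f) (hfc : (f, c) ∈ lam) (hf1 : (f + 1, c) ∉ lam)

lemma mem_removeD {r y : ℕ} :
    (r, y) ∈ removeD lam x f c hxf hfc hf1 ↔ y < trunc lam x f c r := by
  show (r, y) ∈ (removeD lam x f c hxf hfc hf1).cells ↔ _
  unfold removeD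
  simp only [Finset.mem_filter, YoungDiagram.mem_cells]
  constructor
  · rintro ⟨-, h⟩; exact h
  · intro h
    refine ⟨?_, h⟩
    rw [mem_iff_lt_rowLen]
    exact lt_of_lt_of_le h (trunc_le hxf hfc r)

lemma rowLen_removeD (r : ℕ) :
    (removeD lam x f c hxf hfc hf1).rowLen r = trunc lam x f c r :=
  rowLen_eq_of _ _ _ (fun _ => mem_removeD hxf hfc hf1)

lemma removeD_subset : (removeD lam x f c hxf hfc hf1).cells ⊆ lam.cells :=
  Finset.filter_subset _ _

/-! ### The removed cells -/

lemma mem_hook {r y : ℕ} :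
    (r, y) ∈ lam.cells \ (removeD lam x f c hxf hfc hf1).cells ↔
      ((r, y) ∈ lam ∧ trunc lam x f c r ≤ y) := by
  rw [Finset.mem_sdiff, YoungDiagram.mem_cells, YoungDiagram.mem_cells,
    mem_removeD hxf hfc hf1, not_lt]

lemma hook_row_range {r y : ℕ}
    (h : (r, y) ∈ lam.cells \ (removeD lam x f c hxf hfc hf1).cells) :
    x ≤ r ∧ r ≤ f := by
  rw [mem_hook hxf hfc hf1] at h
  by_contra hcon
  have : r < x ∨ f < r := by omega
  rw [trunc_eq_outside this] at h
  rw [mem_iff_lt_rowLen] at h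
  omega

end Trunc

end EllAux
namespace EllAux

open YoungDiagram Finset

lemma adjCell_symm {p q : ℕ × ℕ} (h : AdjCell p q) : AdjCell q p := by
  unfold AdjCell at *; tauto

lemma chainRow {S : Finset (ℕ × ℕ)} (r y : ℕ) :
    ∀ k, (∀ j, j ≤ k → (r, y + j) ∈ S) →
    Relation.ReflTransGen (fun p q => p ∈ S ∧ q ∈ S ∧ AdjCell p q) (r, y + k) (r, y) := by
  intro k
  induction k with
  | zero => intro _; exact .refl
  | succ k IH =>
    intro h
    refine Relation.ReflTransGen.head ⟨h (k+1) le_rfl, h k (by omega), ?_⟩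
      (IH (fun j hj => h j (by omega)))
    left
    exact ⟨rfl, Or.inl rfl⟩

lemma card_rowseg (r a b : ℕ) : ((Finset.Ico a b).image (fun y => (r, y))).card = b - a := by
  rw [Finset.card_image_of_injective _ (fun y1 y2 h => by simpa using congrArg Prod.snd h),
    Nat.card_Ico]

section Trunc2

variable {lam : YoungDiagram} {x f c ℓ : ℕ}
variable (hxf : x ≤ f) (hfc : (f, c) ∈ lam) (hf1 : (f + 1, c) ∉ lam)

include hxf hfc hf1 in
lemma hook_eq_biUnion :
    lam.cells \ (removeD lam x f c hxf hfc hf1).cells =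
    (Finset.Icc x f).biUnion
      (fun r => (Finset.Ico (trunc lam x f c r) (lam.rowLen r)).image (fun y => (r, y))) := by
  ext p
  obtain ⟨r, y⟩ := p
  rw [mem_hook hxf hfc hf1]
  simp only [Finset.mem_biUnion, Finset.mem_Icc, Finset.mem_Ico, Finset.mem_image]
  constructor
  · rintro ⟨hmem, hge⟩
    have hr := hook_row_range hxf hfc hf1 (by rw [mem_hook hxf hfc hf1]; exact ⟨hmem, hge⟩)
    exact ⟨r, ⟨hr.1, hr.2⟩, y, ⟨hge, mem_iff_lt_rowLen.mp hmem⟩, rfl⟩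
  · rintro ⟨r', hr', y', ⟨h1, h2⟩, heq⟩
    rw [Prod.mk.injEq] at heq
    obtain ⟨rfl, rfl⟩ := heq
    exact ⟨mem_iff_lt_rowLen.mpr h2, h1⟩

include hxf hfc hf1 in
lemma hook_card (hhook : lam.rowLen x + f = x + c + ℓ) :
    (lam.cells \ (removeD lam x f c hxf hfc hf1).cells).card = ℓ := by
  have hcf : c < lam.rowLen f := mem_iff_lt_rowLen.mp hfc
  have key : ∀ d x', x ≤ x' → x' + d = f →
      ((Finset.Icc x' f).sum fun r => lam.rowLen r - trunc lam x f c r) + c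
        = lam.rowLen x' + d := by
    intro d
    induction d with
    | zero =>
      intro x' hx1 hx2
      have : x' = f := by omega
      subst this
      rw [Finset.Icc_self, Finset.sum_singleton, trunc_of_f hxf]
      omega
    | succ d IH =>
      intro x' hx1 hx2
      have hins : Finset.Icc x' f = insert x' (Finset.Icc (x' + 1) f) := by
        ext t; simp only [Finset.mem_Icc, Finset.mem_insert]; omega
      rw [hins, Finset.sum_insert (by simp only [Finset.mem_Icc]; omega)]
      rw [trunc_of_mid hx1 (by omega)]
      have IH' := IH (x' + 1) (by omega) (by omega)
      have h1 := lam.rowLen_anti x' (x' + 1) (by omega)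
      have h2 := lam.rowLen_anti (x' + 1) f (by omega)
      omega
  have hdisj : ∀ r1 ∈ Finset.Icc x f, ∀ r2 ∈ Finset.Icc x f, r1 ≠ r2 →
      Disjoint ((Finset.Ico (trunc lam x f c r1) (lam.rowLen r1)).image (fun y => (r1, y)))
        ((Finset.Ico (trunc lam x f c r2) (lam.rowLen r2)).image (fun y => (r2, y))) := by
    intro r1 _ r2 _ hne
    rw [Finset.disjoint_left]
    intro p hp1 hp2
    simp only [Finset.mem_image] at hp1 hp2
    obtain ⟨y1, -, rfl⟩ := hp1
    obtain ⟨y2, -, he⟩ := hp2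
    rw [Prod.mk.injEq] at he
    exact hne he.1.symm
  rw [hook_eq_biUnion hxf hfc hf1, Finset.card_biUnion hdisj]
  simp only [card_rowseg]
  have := key (f - x) x le_rfl (by omega)
  omega

include hxf hfc hf1 in
lemma hook_conn : ConnectedCells (lam.cells \ (removeD lam x f c hxf hfc hf1).cells) := by
  intro p hp q hq
  set S := lam.cells \ (removeD lam x f c hxf hfc hf1).cells with hS
  have hsymm : Symmetric (fun p q => p ∈ S ∧ q ∈ S ∧ AdjCell p q) :=
    fun p q ⟨h1, h2, h3⟩ => ⟨h2, h1, adjCell_symm h3⟩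
  have memS : ∀ r y, (r, y) ∈ S ↔ ((r, y) ∈ lam ∧ trunc lam x f c r ≤ y) :=
    fun r y => mem_hook hxf hfc hf1
  have rowR : ∀ r y, (r, y) ∈ S →
      Relation.ReflTransGen (fun p q => p ∈ S ∧ q ∈ S ∧ AdjCell p q)
        (r, y) (r, lam.rowLen r - 1) := by
    intro r y hmem
    have h1 : y < lam.rowLen r := mem_iff_lt_rowLen.mp ((memS r y).mp hmem).1
    have h2 : trunc lam x f c r ≤ y := ((memS r y).mp hmem).2
    have hall : ∀ j, j ≤ lam.rowLen r - 1 - y → (r, y + j) ∈ S := by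
      intro j hj
      rw [memS]
      exact ⟨mem_iff_lt_rowLen.mpr (by omega), by omega⟩
    have hch := chainRow (S := S) r y (lam.rowLen r - 1 - y) hall
    have he : y + (lam.rowLen r - 1 - y) = lam.rowLen r - 1 := by omega
    rw [he] at hch
    exact (@Relation.ReflTransGen.stdSymm _ _ ⟨hsymm⟩).symm _ _ hch
  have reach : ∀ d r y, r = x + d → r ≤ f → (r, y) ∈ S →
      Relation.ReflTransGen (fun p q => p ∈ S ∧ q ∈ S ∧ AdjCell p q)
        (r, y) (x, lam.rowLen x - 1) := by
    intro d
    induction d with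
    | zero =>
      intro r y hr hrf hmem
      have : r = x := by omega
      subst this
      exact rowR r y hmem
    | succ d IH =>
      intro r y hr hrf hmem
      have h1 : x ≤ r := by omega
      have htl := trunc_lt hxf hfc r h1 hrf
      have step1 := rowR r y hmem
      have hmem1 : (r, lam.rowLen r - 1) ∈ S := by
        rw [memS]
        exact ⟨mem_iff_lt_rowLen.mpr (by omega), by omega⟩
      have e : r - 1 + 1 = r := by omega
      have hmid : trunc lam x f c (r - 1) = lam.rowLen r - 1 := by
        have h := trunc_of_mid (lam := lam) (c := c)
          (show x ≤ r - 1 by omega) (show r - 1 < f by omega)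
        rw [e] at h
        exact h
      have hmem2 : (r - 1, lam.rowLen r - 1) ∈ S := by
        rw [memS]
        refine ⟨?_, by omega⟩
        rw [mem_iff_lt_rowLen]
        have := lam.rowLen_anti (r - 1) r (by omega)
        omega
      have step2 : Relation.ReflTransGen (fun p q => p ∈ S ∧ q ∈ S ∧ AdjCell p q)
          (r, lam.rowLen r - 1) (x, lam.rowLen x - 1) :=
        Relation.ReflTransGen.head
          ⟨hmem1, hmem2, Or.inr ⟨rfl, Or.inl (by omega)⟩⟩
          (IH (r - 1) (lam.rowLen r - 1) (by omega) (by omega) hmem2)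
      exact step1.trans step2
  obtain ⟨rp, yp⟩ := p
  obtain ⟨rq, yq⟩ := q
  have hrp := hook_row_range hxf hfc hf1 hp
  have hrq := hook_row_range hxf hfc hf1 hq
  have h1 := reach (rp - x) rp yp (by omega) hrp.2 hp
  have h2 := reach (rq - x) rq yq (by omega) hrq.2 hq
  exact h1.trans ((@Relation.ReflTransGen.stdSymm _ _ ⟨hsymm⟩).symm _ _ h2)

include hxf hfc hf1 in
lemma hook_no2x2 : No2x2 (lam.cells \ (removeD lam x f c hxf hfc hf1).cells) := by
  rintro ⟨a, b, h1, h2, h3, h4⟩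
  have r1 := hook_row_range hxf hfc hf1 h1
  have r2 := hook_row_range hxf hfc hf1 h2
  rw [mem_hook hxf hfc hf1] at h1 h4
  have hmid : trunc lam x f c a = lam.rowLen (a + 1) - 1 := trunc_of_mid r1.1 (by omega)
  have hb : b + 1 < lam.rowLen (a + 1) := mem_iff_lt_rowLen.mp h4.1
  omega

include hxf hfc hf1 in
lemma hook_horiz (hfx : x = f) :
    HorizontalCells (lam.cells \ (removeD lam x f c hxf hfc hf1).cells) := by
  intro p hp q hq
  have h1 := hook_row_range hxf hfc hf1 hp
  have h2 := hook_row_range hxf hfc hf1 hq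
  omega

include hxf hfc hf1 in
lemma hook_not_horiz (hlt : x < f) :
    ¬ HorizontalCells (lam.cells \ (removeD lam x f c hxf hfc hf1).cells) := by
  intro hH
  have htl := trunc_lt hxf hfc x le_rfl hxf
  have h1 : (x, lam.rowLen x - 1) ∈ lam.cells \ (removeD lam x f c hxf hfc hf1).cells := by
    rw [mem_hook hxf hfc hf1]
    exact ⟨mem_iff_lt_rowLen.mpr (by omega), by omega⟩
  have h2 : (f, c) ∈ lam.cells \ (removeD lam x f c hxf hfc hf1).cells := by
    rw [mem_hook hxf hfc hf1]
    exact ⟨hfc, le_of_eq (trunc_of_f hxf)⟩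
  have := hH _ h1 _ h2
  simp only at this
  omega

end Trunc2

lemma hook_removal (lam : YoungDiagram) (x f c ℓ : ℕ)
    (hcol : lam.colLen c = f + 1) (hxf : x ≤ f)
    (hhook : lam.rowLen x + f = x + c + ℓ) :
    ∃ μ : YoungDiagram, μ.cells ⊆ lam.cells ∧
      IsRemovableRimHook ℓ lam (lam.cells \ μ.cells) ∧
      (∀ r, μ.rowLen r = trunc lam x f c r) ∧
      (x < f → ¬ HorizontalCells (lam.cells \ μ.cells)) ∧
      (x = f → HorizontalCells (lam.cells \ μ.cells)) := by
  have hfc : (f, c) ∈ lam := mem_iff_lt_colLen.mpr (by omega)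
  have hf1 : (f + 1, c) ∉ lam := by rw [mem_iff_lt_colLen]; omega
  exact ⟨removeD lam x f c hxf hfc hf1, removeD_subset hxf hfc hf1,
    ⟨removeD lam x f c hxf hfc hf1, removeD_subset hxf hfc hf1, rfl,
      hook_card hxf hfc hf1 hhook, hook_conn hxf hfc hf1, hook_no2x2 hxf hfc hf1⟩,
    rowLen_removeD hxf hfc hf1,
    fun h => hook_not_horiz hxf hfc hf1 h,
    fun h => hook_horiz hxf hfc hf1 h⟩

end EllAux
namespace EllAux

open YoungDiagram Finset

/-! ### The abacus (first-column hook lengths / beta-numbers) -/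

def bval (lam : YoungDiagram) (N y : ℕ) : ℕ := lam.rowLen y + (N - 1 - y)

def Bset (lam : YoungDiagram) (N : ℕ) : Finset ℕ := (Finset.range N).image (bval lam N)

lemma mem_Bset {lam : YoungDiagram} {N u : ℕ} :
    u ∈ Bset lam N ↔ ∃ y, y < N ∧ bval lam N y = u := by
  simp [Bset, Finset.mem_image, Finset.mem_range]

lemma bval_lt (lam : YoungDiagram) (N : ℕ) {y y' : ℕ} (h : y < y') (h' : y' < N) :
    bval lam N y' < bval lam N y := by
  have := lam.rowLen_anti y y' h.le
  unfold bval; omega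

lemma bval_le (lam : YoungDiagram) (N : ℕ) {y y' : ℕ} (h : y ≤ y') (h' : y' < N) :
    bval lam N y' ≤ bval lam N y := by
  rcases Nat.eq_or_lt_of_le h with rfl | hlt
  · exact le_rfl
  · exact (bval_lt lam N hlt h').le

lemma bval_inj (lam : YoungDiagram) (N : ℕ) {y y' : ℕ} (hy : y < N) (hy' : y' < N)
    (h : bval lam N y = bval lam N y') : y = y' := by
  rcases Nat.lt_trichotomy y y' with hl | hl | hl
  · have := bval_lt lam N hl hy'; omega
  · exact hl
  · have := bval_lt lam N hl hy; omega

/-- Gaps of the abacus correspond to columns. -/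
lemma gap_col (lam : YoungDiagram) (N j : ℕ) (hN : lam.colLen 0 ≤ N)
    (hj : j ∉ Bset lam N) :
    ∃ cc m, lam.colLen cc = m ∧ m ≤ N ∧ j + m = cc + N ∧
      (∀ y, y < N → (j < bval lam N y ↔ y < m)) := by
  have hQ : ∃ y, N ≤ y ∨ bval lam N y ≤ j := ⟨N, Or.inl le_rfl⟩
  set m := Nat.find hQ with hm
  have hQm := Nat.find_spec hQ
  have hmin : ∀ y, y < m → (y < N ∧ j < bval lam N y) := by
    intro y hy
    have := Nat.find_min hQ hy
    push_neg at this
    exact ⟨by omega, this.2⟩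
  have hmN : m ≤ N := Nat.find_min' hQ (Or.inl le_rfl)
  have hbig : ∀ y, m ≤ y → y < N → bval lam N y < j := by
    intro y h1 h2
    have hbm : bval lam N m ≤ j := by
      rcases hQm with h | h
      · omega
      · exact h
    have hle : bval lam N y ≤ bval lam N m := bval_le lam N h1 h2
    have hne : bval lam N y ≠ j := fun he => hj (mem_Bset.mpr ⟨y, h2, he⟩)
    omega
  have hNjm : N ≤ j + m := by
    rcases Nat.eq_or_lt_of_le hmN with he | hlt
    · omega
    · have h1 : bval lam N m < j := hbig m le_rfl hlt
      have h2 : N - 1 - m ≤ bval lam N m := by unfold bval; omega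
      omega
  refine ⟨j + m - N, m, ?_, hmN, by omega, fun y hy => ?_⟩
  · apply colLen_eq_of
    intro y
    constructor
    · intro hmem
      by_contra hge
      push_neg at hge
      rcases Nat.lt_or_ge y N with h2 | h2
      · have hmlt : m < N := by omega
        have hbm : bval lam N m < j := hbig m le_rfl hmlt
        have h4 : lam.rowLen y ≤ lam.rowLen m := lam.rowLen_anti m y hge
        have h5 := mem_iff_lt_rowLen.mp hmem
        unfold bval at hbm
        omega
      · have h0 : (y, 0) ∈ lam := lam.up_left_mem le_rfl (Nat.zero_le _) hmem
        rw [mem_iff_lt_colLen] at h0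
        omega
    · intro hy2
      have h1 := hmin y hy2
      have hm1 : 0 < m := by omega
      have hlast := hmin (m - 1) (by omega)
      have hcm : j + m - N < lam.rowLen (m - 1) := by
        have h2 := hlast.2
        unfold bval at h2
        omega
      have h3 := lam.rowLen_anti y (m - 1) (by omega)
      rw [mem_iff_lt_rowLen]
      omega
  · constructor
    · intro h
      by_contra hc
      push_neg at hc
      have := hbig y hc hy
      omega
    · intro h
      exact (hmin y h).2

end EllAux
namespace EllAux

open YoungDiagram Finset

lemma EP_ab (lam : YoungDiagram) (ℓ N z j xz : ℕ) (hl : 1 ≤ ℓ)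
    (hH0 : ∀ s, IsRemovableRimHook ℓ lam s → HorizontalCells s)
    (hN : lam.colLen 0 ≤ N) (hxz : xz < N) (hz : bval lam N xz = z)
    (hjz : j + ℓ = z) (hj : j ∉ Bset lam N) :
    ∀ u, u ∈ Bset lam N → j < u → z ≤ u := by
  obtain ⟨cc, m, hcol, hmN, heq, hchar⟩ := gap_col lam N j hN hj
  have hxm : xz < m := (hchar xz hxz).mp (by rw [hz]; omega)
  have hfm : 0 < m := by omega
  have hhook : lam.rowLen xz + (m - 1) = xz + cc + ℓ := by
    unfold bval at hz
    omega
  obtain ⟨μ, hsub, hrim, hrow, hnh, hh⟩ :=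
    hook_removal lam xz (m - 1) cc ℓ (by rw [hcol]; omega) (by omega) hhook
  have hxf : m = xz + 1 := by
    by_contra hne
    exact hnh (by omega) (hH0 _ hrim)
  intro u hu hju
  obtain ⟨y, hyN, rfl⟩ := mem_Bset.mp hu
  have hym : y < m := (hchar y hyN).mp hju
  have hyx : y ≤ xz := by omega
  rcases Nat.eq_or_lt_of_le hyx with rfl | hlt
  · omega
  · have := bval_lt lam N hlt hxz
    omega

lemma move (lam : YoungDiagram) (ℓ N z j xz : ℕ) (hl : 1 ≤ ℓ)
    (hN : lam.colLen 0 ≤ N) (hxz : xz < N) (hz : bval lam N xz = z)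
    (hjz : j + ℓ = z) (hj : j ∉ Bset lam N)
    (hno : ∀ u, u ∈ Bset lam N → j < u → z ≤ u) :
    ∃ lam' : YoungDiagram, RemoveHorizHook ℓ lam lam' ∧
      lam'.cells.card + ℓ = lam.cells.card ∧ lam'.colLen 0 ≤ N ∧
      (∀ u, u ∈ Bset lam' N ↔ ((u ∈ Bset lam N ∧ u ≠ z) ∨ u = j)) := by
  obtain ⟨cc, m, hcol, hmN, heq, hchar⟩ := gap_col lam N j hN hj
  have hxm : xz < m := (hchar xz hxz).mp (by rw [hz]; omega)
  have hm : m = xz + 1 := by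
    by_contra hne
    have h1 : xz + 1 < m := by omega
    have h2 : xz + 1 < N := by omega
    have hb1 : j < bval lam N (xz + 1) := (hchar _ h2).mpr h1
    have hb2 : bval lam N (xz + 1) < z := by
      rw [← hz]; exact bval_lt lam N (by omega) h2
    have := hno _ (mem_Bset.mpr ⟨xz + 1, h2, rfl⟩) hb1
    omega
  have hhook : lam.rowLen xz + (m - 1) = xz + cc + ℓ := by
    unfold bval at hz
    omega
  obtain ⟨μ, hsub, hrim, hrow, hnh, hh⟩ :=
    hook_removal lam xz (m - 1) cc ℓ (by rw [hcol]; omega) (by omega) hhook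
  have hhor := hh (by omega)
  have hstep : RemoveHorizHook ℓ lam μ :=
    ⟨lam.cells \ μ.cells, hrim, hhor, (Finset.sdiff_sdiff_eq_self hsub).symm⟩
  have hcards : (lam.cells \ μ.cells).card = ℓ := by
    obtain ⟨ν, -, hs, hcard, -, -⟩ := hrim
    exact hcard
  refine ⟨μ, hstep, ?_, ?_, ?_⟩
  · have h1 := Finset.card_sdiff_of_subset hsub
    have h2 := Finset.card_le_card hsub
    omega
  · have : μ.colLen 0 ≤ lam.colLen 0 := by
      by_contra h
      push_neg at h
      have h1 : (lam.colLen 0, 0) ∈ μ := mem_iff_lt_colLen.mpr h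
      have h2 : (lam.colLen 0, 0) ∈ lam := by
        rw [← YoungDiagram.mem_cells]
        exact hsub (by rwa [YoungDiagram.mem_cells])
      rw [mem_iff_lt_colLen] at h2
      omega
    omega
  · intro u
    have htz : trunc lam xz (m - 1) cc xz = cc := by
      rw [show m - 1 = xz from by omega]
      exact trunc_of_f le_rfl
    have hto : ∀ r, r ≠ xz → trunc lam xz (m - 1) cc r = lam.rowLen r := by
      intro r hr
      apply trunc_eq_outside
      omega
    have hbvalμ : ∀ y, y < N → bval μ N y = if y = xz then j else bval lam N y := by
      intro y hy
      unfold bval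
      rw [hrow y]
      by_cases hcase : y = xz
      · subst hcase
        rw [if_pos rfl, htz]
        omega
      · rw [if_neg hcase, hto y hcase]
    constructor
    · intro hu
      obtain ⟨y, hy, rfl⟩ := mem_Bset.mp hu
      have hb := hbvalμ y hy
      by_cases hcase : y = xz
      · right; rw [hb, if_pos hcase]
      · left
        refine ⟨mem_Bset.mpr ⟨y, hy, (by rw [hb, if_neg hcase])⟩, ?_⟩
        rw [hb, if_neg hcase]
        intro he
        exact hcase (bval_inj lam N hy hxz (by rw [he, hz]))
    · rintro (⟨hu, hne⟩ | rfl)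
      · obtain ⟨y, hy, rfl⟩ := mem_Bset.mp hu
        have hyne : y ≠ xz := fun he => hne (by rw [he, hz])
        exact mem_Bset.mpr ⟨y, hy, by rw [hbvalμ y hy, if_neg hyne]⟩
      · exact mem_Bset.mpr ⟨xz, hxz, by rw [hbvalμ xz hxz, if_pos rfl]⟩

end EllAux
namespace EllAux

open YoungDiagram Finset

def Hered (ℓ : ℕ) (lam : YoungDiagram) : Prop :=
  ∀ μ : YoungDiagram, Relation.ReflTransGen (RemoveHorizHook ℓ) lam μ →
    ∀ s, IsRemovableRimHook ℓ μ s → HorizontalCells s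

lemma hered_step {ℓ : ℕ} {lam lam' : YoungDiagram} (h : Hered ℓ lam)
    (hst : RemoveHorizHook ℓ lam lam') : Hered ℓ lam' :=
  fun μ hr => h μ (Relation.ReflTransGen.head hst hr)

lemma key (ℓ : ℕ) (hℓ : 2 ≤ ℓ) (N : ℕ) :
    ∀ n (lam : YoungDiagram) (g p q : ℕ), lam.cells.card = n →
      Hered ℓ lam → lam.colLen 0 ≤ N →
      p ∈ Bset lam N → q ∈ Bset lam N → g ∉ Bset lam N →
      g < p → g < q → ((p : ZMod ℓ) = (g : ZMod ℓ)) → ((q : ZMod ℓ) ≠ (g : ZMod ℓ)) →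
      False := by
  haveI : NeZero ℓ := ⟨by omega⟩
  intro n
  induction n using Nat.strong_induction_on with
  | _ n IH =>
  intro lam g p q hcard hH hN hp hq hg hgp hgq hpm hqm
  have hH0 : ∀ s, IsRemovableRimHook ℓ lam s → HorizontalCells s :=
    hH lam Relation.ReflTransGen.refl
  set S0 := (Bset lam N).filter (fun z => g < z ∧ (z : ZMod ℓ) = (g : ZMod ℓ)) with hS0
  have hpS0 : p ∈ S0 := Finset.mem_filter.mpr ⟨hp, hgp, hpm⟩
  have hne : S0.Nonempty := ⟨p, hpS0⟩
  set v := S0.min' hne with hv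
  have hvS : v ∈ S0 := S0.min'_mem hne
  rw [Finset.mem_filter] at hvS
  obtain ⟨hvB, hgv, hvm⟩ := hvS
  have hdvd : ℓ ∣ (v - g) := by
    have hc : ((v - g : ℕ) : ZMod ℓ) = 0 := by
      rw [Nat.cast_sub hgv.le, hvm, sub_self]
    exact (ZMod.natCast_eq_zero_iff _ _).mp hc
  have hvgl : g + ℓ ≤ v := by
    have := Nat.le_of_dvd (by omega) hdvd
    omega
  set j := v - ℓ with hj
  have hjv : j + ℓ = v := by omega
  have hjmod : ((j : ℕ) : ZMod ℓ) = (g : ZMod ℓ) := by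
    rw [hj, Nat.cast_sub (show ℓ ≤ v by omega), ZMod.natCast_self, sub_zero, hvm]
  have hjB : j ∉ Bset lam N := by
    intro hjmem
    rcases Nat.eq_or_lt_of_le (show g ≤ j by omega) with he | hlt
    · exact hg (by rw [he]; exact hjmem)
    · have hjs : j ∈ S0 := Finset.mem_filter.mpr ⟨hjmem, hlt, hjmod⟩
      have hlej : v ≤ j := S0.min'_le j hjs
      omega
  obtain ⟨xv, hxvN, hbxv⟩ := mem_Bset.mp hvB
  have hno := EP_ab lam ℓ N v j xv (by omega) hH0 hN hxvN hbxv hjv hjB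
  rcases Nat.eq_or_lt_of_le (show g ≤ j by omega) with hcase | hcase
  · -- j = g : hard case
    set S1 := (Bset lam N).filter (fun z => g < z ∧ (z : ZMod ℓ) ≠ (g : ZMod ℓ)) with hS1
    have hqS1 : q ∈ S1 := Finset.mem_filter.mpr ⟨hq, hgq, hqm⟩
    have hne1 : S1.Nonempty := ⟨q, hqS1⟩
    set w := S1.min' hne1 with hw
    have hwS : w ∈ S1 := S1.min'_mem hne1
    rw [Finset.mem_filter] at hwS
    obtain ⟨hwB, hgw, hwm⟩ := hwS
    have hwv : v < w := by
      have h1 := hno w hwB (by omega)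
      rcases Nat.eq_or_lt_of_le h1 with he | hlt
      · exact absurd (by rw [← he]; exact hvm : ((w : ℕ) : ZMod ℓ) = (g : ZMod ℓ)) hwm
      · exact hlt
    have hwl : ℓ ≤ w := by omega
    set j' := w - ℓ with hj'
    have hj'v : j' + ℓ = w := by omega
    have hj'mod : ((j' : ℕ) : ZMod ℓ) = ((w : ℕ) : ZMod ℓ) := by
      rw [hj', Nat.cast_sub hwl, ZMod.natCast_self, sub_zero]
    have hj'g : g < j' := by omega
    have hj'B : j' ∉ Bset lam N := by
      intro hmem
      have hjs : j' ∈ S1 := Finset.mem_filter.mpr ⟨hmem, hj'g, by rw [hj'mod]; exact hwm⟩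
      have hlej : w ≤ j' := S1.min'_le _ hjs
      omega
    obtain ⟨xw, hxwN, hbxw⟩ := mem_Bset.mp hwB
    have hno' := EP_ab lam ℓ N w j' xw (by omega) hH0 hN hxwN hbxw hj'v hj'B
    have hvj' : v < j' := by
      rcases Nat.lt_trichotomy v j' with h | h | h
      · exact h
      · exact absurd (show j' ∈ Bset lam N by rw [← h]; exact hvB) hj'B
      · have := hno' v hvB h
        omega
    obtain ⟨lam', hstep, hcard', hN', hBset'⟩ :=
      move lam ℓ N w j' xw (by omega) hN hxwN hbxw hj'v hj'B hno'
    refine IH lam'.cells.card (by omega) lam' g v j' rfl (hered_step hH hstep) hN'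
      ?_ ?_ ?_ hgv hj'g hvm ?_
    · refine (hBset' v).mpr (Or.inl ⟨hvB, fun he => hwm ?_⟩)
      rw [← he]; exact hvm
    · exact (hBset' j').mpr (Or.inr rfl)
    · intro hmem
      rcases (hBset' g).mp hmem with ⟨hgB', -⟩ | he
      · exact hg hgB'
      · omega
    · rw [hj'mod]; exact hwm
  · -- j > g : move v down
    obtain ⟨lam', hstep, hcard', hN', hBset'⟩ :=
      move lam ℓ N v j xv (by omega) hN hxvN hbxv hjv hjB hno
    refine IH lam'.cells.card (by omega) lam' g j q rfl (hered_step hH hstep) hN'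
      ?_ ?_ ?_ hcase hgq hjmod hqm
    · exact (hBset' j).mpr (Or.inr rfl)
    · refine (hBset' q).mpr (Or.inl ⟨hq, fun he => hqm ?_⟩)
      rw [he]; exact hvm
    · intro hmem
      rcases (hBset' g).mp hmem with ⟨hgB', -⟩ | he
      · exact hg hgB'
      · omega

end EllAux
namespace EllAux

open YoungDiagram Finset

lemma addable_col {lam : YoungDiagram} {a b : ℕ} (h : IsAddableBox lam a b) :
    b = lam.rowLen a := by
  obtain ⟨h1, h2, h3⟩ := h
  rw [mem_iff_lt_rowLen] at h1
  push_neg at h1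
  rcases h2 with rfl | h2
  · omega
  · rw [mem_iff_lt_rowLen] at h2
    omega

lemma removable_col {lam : YoungDiagram} {a b : ℕ} (h : IsRemovableBox lam a b) :
    b + 1 = lam.rowLen a ∧ lam.rowLen (a + 1) ≤ b := by
  obtain ⟨h1, h2, h3⟩ := h
  rw [mem_iff_lt_rowLen] at h1 h2 h3
  push_neg at h2 h3
  omega

lemma not_addRow {ℓ : ℕ} (hℓ : 2 ≤ ℓ) {lam : YoungDiagram} {i : ZMod ℓ} {a b : ℕ}
    (hrem : IsRemovableBox lam a b) (hres : resBox ℓ a b = i) :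
    ¬ AddRow ℓ lam i a := by
  haveI : Fact (1 < ℓ) := ⟨by omega⟩
  rintro ⟨b', hadd, hres'⟩
  have h1 := removable_col hrem
  have h2 := addable_col hadd
  unfold resBox at hres hres'
  have e : ((b' : ℕ) : ZMod ℓ) = ((b : ℕ) : ZMod ℓ) + 1 := by
    rw [show b' = b + 1 from by omega]
    push_cast
    ring
  exact one_ne_zero (α := ZMod ℓ) (by linear_combination hres' - hres - e)

lemma not_remRow {ℓ : ℕ} (hℓ : 2 ≤ ℓ) {lam : YoungDiagram} {i : ZMod ℓ} {a b : ℕ}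
    (hadd : IsAddableBox lam a b) (hres : resBox ℓ a b = i) :
    ¬ RemRow ℓ lam i a := by
  haveI : Fact (1 < ℓ) := ⟨by omega⟩
  rintro ⟨b'', hrem, hres''⟩
  have h1 := removable_col hrem
  have h2 := addable_col hadd
  unfold resBox at hres hres''
  have e : ((b : ℕ) : ZMod ℓ) = ((b'' : ℕ) : ZMod ℓ) + 1 := by
    rw [show b = b'' + 1 from by omega]
    push_cast
    ring
  exact one_ne_zero (α := ZMod ℓ) (by linear_combination hres - hres'' - e)

lemma normal_lt_conormal {ℓ : ℕ} (hℓ : 2 ≤ ℓ) {lam : YoungDiagram} {i : ZMod ℓ}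
    {a b a' b' : ℕ} (hn : NormalBox ℓ lam i a b) (hc : ConormalBox ℓ lam i a' b') :
    a < a' := by
  haveI : Fact (1 < ℓ) := ⟨by omega⟩
  obtain ⟨hrem, hres, hcount⟩ := hn
  obtain ⟨hadd, hres', hcount'⟩ := hc
  rcases Nat.lt_trichotomy a a' with h | h | h
  · exact h
  · exfalso
    subst h
    have h1 := removable_col hrem
    have h2 := addable_col hadd
    unfold resBox at hres hres'
    have e : ((b' : ℕ) : ZMod ℓ) = ((b : ℕ) : ZMod ℓ) + 1 := by
      rw [show b' = b + 1 from by omega]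
      push_cast
      ring
    exact one_ne_zero (α := ZMod ℓ) (by linear_combination hres' - hres - e)
  · exfalso
    have hXf : {r : ℕ | a' < r ∧ r < a ∧ AddRow ℓ lam i r}.Finite :=
      (Set.finite_Iio a).subset (fun r hr => hr.2.1)
    have hYf : {r : ℕ | a' < r ∧ r < a ∧ RemRow ℓ lam i r}.Finite :=
      (Set.finite_Iio a).subset (fun r hr => hr.2.1)
    have hA1 : {r : ℕ | a' ≤ r ∧ r < a ∧ AddRow ℓ lam i r}
        = insert a' {r : ℕ | a' < r ∧ r < a ∧ AddRow ℓ lam i r} := by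
      ext r
      simp only [Set.mem_setOf_eq, Set.mem_insert_iff]
      constructor
      · rintro ⟨h1, h2, h3⟩
        rcases Nat.eq_or_lt_of_le h1 with he | hlt
        · exact Or.inl he.symm
        · exact Or.inr ⟨hlt, h2, h3⟩
      · rintro (rfl | ⟨h1, h2, h3⟩)
        · exact ⟨le_rfl, h, ⟨b', hadd, hres'⟩⟩
        · exact ⟨h1.le, h2, h3⟩
    have hR1 : {r : ℕ | a' ≤ r ∧ r < a ∧ RemRow ℓ lam i r}
        = {r : ℕ | a' < r ∧ r < a ∧ RemRow ℓ lam i r} := by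
      ext r
      simp only [Set.mem_setOf_eq]
      constructor
      · rintro ⟨h1, h2, h3⟩
        rcases Nat.eq_or_lt_of_le h1 with he | hlt
        · exfalso
          rw [← he] at h3
          exact not_remRow hℓ hadd hres' h3
        · exact ⟨hlt, h2, h3⟩
      · rintro ⟨h1, h2, h3⟩
        exact ⟨h1.le, h2, h3⟩
    have hR2 : {r : ℕ | a' < r ∧ r ≤ a ∧ RemRow ℓ lam i r}
        = insert a {r : ℕ | a' < r ∧ r < a ∧ RemRow ℓ lam i r} := by
      ext r
      simp only [Set.mem_setOf_eq, Set.mem_insert_iff]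
      constructor
      · rintro ⟨h1, h2, h3⟩
        rcases Nat.eq_or_lt_of_le h2 with he | hlt
        · exact Or.inl he
        · exact Or.inr ⟨h1, hlt, h3⟩
      · rintro (rfl | ⟨h1, h2, h3⟩)
        · exact ⟨h, le_rfl, ⟨b, hrem, hres⟩⟩
        · exact ⟨h1, h2.le, h3⟩
    have hA2 : {r : ℕ | a' < r ∧ r ≤ a ∧ AddRow ℓ lam i r}
        = {r : ℕ | a' < r ∧ r < a ∧ AddRow ℓ lam i r} := by
      ext r
      simp only [Set.mem_setOf_eq]
      constructor
      · rintro ⟨h1, h2, h3⟩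
        rcases Nat.eq_or_lt_of_le h2 with he | hlt
        · exfalso
          rw [he] at h3
          exact not_addRow hℓ hrem hres h3
        · exact ⟨h1, hlt, h3⟩
      · rintro ⟨h1, h2, h3⟩
        exact ⟨h1, h2.le, h3⟩
    have hNle := hcount a' h
    have hCle := hcount' a h
    rw [hA1, hR1] at hNle
    rw [hR2, hA2] at hCle
    rw [Set.ncard_insert_of_notMem (fun hmem => absurd hmem.1 (lt_irrefl _)) hXf] at hNle
    rw [Set.ncard_insert_of_notMem (fun hmem => absurd hmem.2.1 (lt_irrefl _)) hYf] at hCle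
    omega

end EllAux
namespace EllAux

open YoungDiagram Finset

lemma main' {ℓ : ℕ} (hℓ : 2 ≤ ℓ) (i : ZMod ℓ) (lam : YoungDiagram)
    (hH : Hered ℓ lam) (a b a₁ b₁ a₂ b₂ : ℕ) (hn : NormalBox ℓ lam i a b)
    (hc1 : ConormalBox ℓ lam i a₁ b₁) (hc2 : ConormalBox ℓ lam i a₂ b₂)
    (h12 : a₁ < a₂) : False := by
  haveI : NeZero ℓ := ⟨by omega⟩
  haveI : Fact (1 < ℓ) := ⟨by omega⟩
  have ha1 : a < a₁ := normal_lt_conormal hℓ hn hc1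
  have ha2 : a < a₂ := normal_lt_conormal hℓ hn hc2
  obtain ⟨hrem, hres, -⟩ := hn
  obtain ⟨hadd1, hres1, -⟩ := hc1
  obtain ⟨hadd2, hres2, -⟩ := hc2
  have hb := removable_col hrem
  have hb1 : b₁ = lam.rowLen a₁ := addable_col hadd1
  have hb2 : b₂ = lam.rowLen a₂ := addable_col hadd2
  have ha2pos : 1 ≤ a₂ := by omega
  have hstep2 : lam.rowLen a₂ < lam.rowLen (a₂ - 1) := by
    rcases hadd2.2.2 with h | h
    · omega
    · have := mem_iff_lt_rowLen.mp h
      omega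
  have hmono1 : lam.rowLen (a₂ - 1) ≤ lam.rowLen a₁ := lam.rowLen_anti _ _ (by omega)
  have hmono0 : lam.rowLen a₁ ≤ lam.rowLen a := lam.rowLen_anti _ _ (by omega)
  set N := a₂ + 1 + lam.colLen 0 with hN
  set g := lam.rowLen a₂ + (N - a₂) with hg
  set p := bval lam N a with hp
  set q := bval lam N a₁ with hq
  have hexp : ∀ y : ℕ, bval lam N y = lam.rowLen y + (N - 1 - y) := fun y => rfl
  have hgB : g ∉ Bset lam N := by
    intro hmem
    obtain ⟨y, hy, hby⟩ := mem_Bset.mp hmem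
    rcases Nat.lt_trichotomy y a₂ with h | h | h
    · have h1 : bval lam N (a₂ - 1) ≤ bval lam N y := bval_le lam N (by omega) (by omega)
      have h2 := hexp (a₂ - 1)
      have h3 := hexp y
      omega
    · subst h
      have h2 := hexp y
      omega
    · have h1 : bval lam N y < bval lam N a₂ := bval_lt lam N h hy
      have h2 := hexp a₂
      omega
  have haN : a < N := by omega
  have ha1N : a₁ < N := by omega
  have hpB : p ∈ Bset lam N := mem_Bset.mpr ⟨a, haN, rfl⟩
  have hqB : q ∈ Bset lam N := mem_Bset.mpr ⟨a₁, ha1N, rfl⟩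
  have hgp : g < p := by
    have h2 := hexp a
    omega
  have hgq : g < q := by
    have h2 := hexp a₁
    omega
  have hresb : ((b : ℕ) : ZMod ℓ) = i + a := by
    unfold resBox at hres
    linear_combination hres
  have hresb1 : ((b₁ : ℕ) : ZMod ℓ) = i + a₁ := by
    unfold resBox at hres1
    linear_combination hres1
  have hresb2 : ((b₂ : ℕ) : ZMod ℓ) = i + a₂ := by
    unfold resBox at hres2
    linear_combination hres2
  have hcastp : ((p : ℕ) : ZMod ℓ) = i + N := by
    have e : p = b + 1 + (N - (1 + a)) := by
      have h2 := hexp a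
      omega
    rw [e]
    push_cast [Nat.cast_sub (show 1 + a ≤ N by omega)]
    rw [hresb]
    ring
  have hcastg : ((g : ℕ) : ZMod ℓ) = i + N := by
    have e : g = b₂ + (N - a₂) := by omega
    rw [e]
    push_cast [Nat.cast_sub (show a₂ ≤ N by omega)]
    rw [hresb2]
    ring
  have hcastq : ((q : ℕ) : ZMod ℓ) = i + N - 1 := by
    have e : q = b₁ + (N - (1 + a₁)) := by
      have h2 := hexp a₁
      omega
    rw [e]
    push_cast [Nat.cast_sub (show 1 + a₁ ≤ N by omega)]
    rw [hresb1]
    ring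
  have hpm : ((p : ℕ) : ZMod ℓ) = ((g : ℕ) : ZMod ℓ) := by rw [hcastp, hcastg]
  have hqm : ((q : ℕ) : ZMod ℓ) ≠ ((g : ℕ) : ZMod ℓ) := by
    rw [hcastq, hcastg]
    intro hcon
    exact one_ne_zero (α := ZMod ℓ) (by linear_combination -hcon)
  exact key ℓ hℓ N lam.cells.card lam g p q rfl hH (by omega) hpB hqB hgB hgp hgq hpm hqm

end EllAux

/-- An `ℓ`-partition cannot have simultaneously one normal `i`-box and two distinct
conormal `i`-boxes of the same residue `i`. -/
theorem stmt_13 (ℓ : ℕ) (hℓ : 2 ≤ ℓ) (i : ZMod ℓ) (lam : YoungDiagram)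
    (h : IsEllPartition ℓ lam) :
    ¬ ∃ a b a₁ b₁ a₂ b₂ : ℕ, NormalBox ℓ lam i a b ∧
      ConormalBox ℓ lam i a₁ b₁ ∧ ConormalBox ℓ lam i a₂ b₂ ∧ (a₁, b₁) ≠ (a₂, b₂) := by
  rintro ⟨a, b, a₁, b₁, a₂, b₂, hn, hc1, hc2, hne⟩
  have hH : EllAux.Hered ℓ lam := h.2
  rcases Nat.lt_trichotomy a₁ a₂ with h12 | h12 | h12
  · exact EllAux.main' hℓ i lam hH a b a₁ b₁ a₂ b₂ hn hc1 hc2 h12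
  · subst h12
    apply hne
    have e1 := EllAux.addable_col hc1.1
    have e2 := EllAux.addable_col hc2.1
    rw [e1, e2]
  · exact EllAux.main' hℓ i lam hH a b a₂ b₂ a₁ b₁ hn hc2 hc1 h12
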